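/- In the intercept-only equicorrelated model with 0 < b < a and integer cluster sizes N_g ≥ 1, the variance formulas imply Var(β̂) ≤ a/G and Var(β̂_POLS) ≥ b · (max_g N_g / Σ_g N_g)². Consequently, along any sequence of such models in which G → ∞ and the largest cluster retains a share of observations bounded below, max_g N_g ≥ δ · Σ_g N_g for a fixed δ > 0, one has Var(β̂) → 0 while Var(β̂_POLS) ≥ b δ² > 0 for every G; in particular the cluster-average estimator is asymptotically more efficient than POLS. -/
import Mathlib


open Filter

/-- asymptotic efficiency comparison of the paper's Result 2,
dominant-cluster case.  With `0 < b < a` and cluster sizes `N_g ≥ 1`, the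
variance formulas `v̂_G = (a−b)/G²·∑ 1/N_g + b/G` and
`vP_G = (a−b)/∑N_g + b·∑N_g²/(∑N_g)²` satisfy `v̂_G ≤ a/G` and
`vP_G ≥ b·(N_g/∑N_g)²` for every `g` (hence `vP_G ≥ b·(max_g N_g/∑N_g)²`).
Consequently, if the largest cluster keeps a share `max_g N_g ≥ δ·∑N_g`
(`δ > 0`) then `v̂_G → 0` as `G → ∞` while `vP_G ≥ bδ² > 0` for every `G ≥ 1`:
the cluster-average estimator is asymptotically more efficient than POLS. -/
theorem stmt12 (a b δ : ℝ) (hb : 0 < b) (hba : b < a) (hδ : 0 < δ)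
    (N : (G : ℕ) → Fin G → ℕ) (hN : ∀ G g, 1 ≤ N G g)
    (vhat vP : ℕ → ℝ)
    (hvhat : ∀ G, vhat G =
      (a - b) / (G : ℝ) ^ 2 * (∑ g, ((N G g : ℝ))⁻¹) + b / (G : ℝ))
    (hvP : ∀ G, vP G =
      (a - b) / (∑ g, (N G g : ℝ)) +
        b * (∑ g, (N G g : ℝ) ^ 2) / (∑ g, (N G g : ℝ)) ^ 2)
    (hdom : ∀ G : ℕ, 1 ≤ G → ∃ g : Fin G, δ * ∑ g', (N G g' : ℝ) ≤ (N G g : ℝ)) :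
    (∀ G : ℕ, 1 ≤ G → vhat G ≤ a / (G : ℝ)) ∧
    (∀ G : ℕ, 1 ≤ G → ∀ g : Fin G,
      b * ((N G g : ℝ) / ∑ g', (N G g' : ℝ)) ^ 2 ≤ vP G) ∧
    Tendsto vhat atTop (nhds 0) ∧
    (∀ G : ℕ, 1 ≤ G → b * δ ^ 2 ≤ vP G) := by
  have hab : (0:ℝ) < a - b := by linarith
  -- basic facts for G ≥ 1
  have hsumpos : ∀ G : ℕ, 1 ≤ G → (0:ℝ) < ∑ g, (N G g : ℝ) := by
    intro G hG
    have : (0:ℝ) < ∑ g : Fin G, (1:ℝ) := by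
      simp [Finset.card_univ]
      exact_mod_cast hG
    refine lt_of_lt_of_le this ?_
    apply Finset.sum_le_sum
    intro g _
    exact_mod_cast hN G g
  have h1 : ∀ G : ℕ, 1 ≤ G → vhat G ≤ a / (G : ℝ) := by
    intro G hG
    have hGpos : (0:ℝ) < (G:ℝ) := by exact_mod_cast hG
    rw [hvhat]
    have hsum : (∑ g : Fin G, ((N G g : ℝ))⁻¹) ≤ (G : ℝ) := by
      calc (∑ g : Fin G, ((N G g : ℝ))⁻¹) ≤ ∑ g : Fin G, (1:ℝ) := by
            apply Finset.sum_le_sum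
            intro g _
            have : (1:ℝ) ≤ (N G g : ℝ) := by exact_mod_cast hN G g
            exact inv_le_one_of_one_le₀ this
        _ = (G : ℝ) := by simp
    have h2 : (a - b) / (G : ℝ) ^ 2 * (∑ g, ((N G g : ℝ))⁻¹)
        ≤ (a - b) / (G : ℝ) ^ 2 * (G : ℝ) := by
      apply mul_le_mul_of_nonneg_left hsum
      positivity
    have heq : (a - b) / (G : ℝ) ^ 2 * (G : ℝ) + b / (G:ℝ) = a / (G:ℝ) := by
      field_simp
      ring
    linarith
  have h2 : ∀ G : ℕ, 1 ≤ G → ∀ g : Fin G,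
      b * ((N G g : ℝ) / ∑ g', (N G g' : ℝ)) ^ 2 ≤ vP G := by
    intro G hG g
    have hs := hsumpos G hG
    rw [hvP]
    have hsq : (N G g : ℝ) ^ 2 ≤ ∑ g', (N G g' : ℝ) ^ 2 :=
      Finset.single_le_sum (f := fun g' => (N G g' : ℝ)^2)
        (fun g' _ => by positivity) (Finset.mem_univ g)
    have hfirst : (0:ℝ) ≤ (a - b) / (∑ g', (N G g' : ℝ)) := by positivity
    have : b * ((N G g : ℝ) / ∑ g', (N G g' : ℝ)) ^ 2
        ≤ b * (∑ g', (N G g' : ℝ) ^ 2) / (∑ g', (N G g' : ℝ)) ^ 2 := by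
      rw [div_pow, mul_div_assoc]
      apply mul_le_mul_of_nonneg_left _ hb.le
      apply div_le_div_of_nonneg_right hsq (by positivity) |>.trans_eq rfl
    linarith
  have h4 : ∀ G : ℕ, 1 ≤ G → b * δ ^ 2 ≤ vP G := by
    intro G hG
    obtain ⟨g, hg⟩ := hdom G hG
    have hs := hsumpos G hG
    have hδle : δ ≤ (N G g : ℝ) / ∑ g', (N G g' : ℝ) := by
      rw [le_div_iff₀ hs]
      linarith [hg]
    have : δ ^ 2 ≤ ((N G g : ℝ) / ∑ g', (N G g' : ℝ)) ^ 2 :=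
      pow_le_pow_left₀ hδ.le hδle 2
    calc b * δ ^ 2 ≤ b * ((N G g : ℝ) / ∑ g', (N G g' : ℝ)) ^ 2 := by
          apply mul_le_mul_of_nonneg_left this hb.le
      _ ≤ vP G := h2 G hG g
  refine ⟨h1, h2, ?_, h4⟩
  -- squeeze: 0 ≤ vhat G ≤ a / G
  have hlow : ∀ G : ℕ, 0 ≤ vhat G := by
    intro G
    rw [hvhat]
    have : (0:ℝ) ≤ ∑ g : Fin G, ((N G g : ℝ))⁻¹ := by positivity
    positivity
  have hhigh : ∀ᶠ G : ℕ in atTop, vhat G ≤ a / (G : ℝ) :=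
    eventually_atTop.2 ⟨1, fun G hG => h1 G hG⟩
  have htop : Tendsto (fun G : ℕ => a / (G : ℝ)) atTop (nhds 0) :=
    tendsto_const_nhds.div_atTop tendsto_natCast_atTop_atTop
  exact squeeze_zero' (Eventually.of_forall hlow) hhigh htop
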